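/- Convergence of SGT2-QL: let β > 0, let (α_k)_{k≥0} be deterministic step sizes with 0 ≤ α_k ≤ 1, Σ_{k} α_k = ∞ and Σ_{k} α_k² < ∞, and on a probability space let (s_k, a_k, s'_k)_{k≥0} be i.i.d. S×A×S-valued random variables whose common law assigns probability d(s,a)·P(s'|s,a) to (s,a,s'), where d(s,a) > 0 for all (s,a). Define random sequences Qᴬ_k, Qᴮ_k : S×A → ℝ by arbitrary deterministic initializations Qᴬ_0, Qᴮ_0 and the recursion: Qᴬ_{k+1}(s,a) = Qᴬ_k(s,a) + α_k·1{(s,a)=(s_k,a_k)}·(r(s_k,a_k,s'_k) + γ·max_{a'∈A} Qᴮ_k(s'_k,a') − Qᴬ_k(s_k,a_k) + β·(Qᴮ_k(s_k,a_k) − Qᴬ_k(s_k,a_k))) and Qᴮ_{k+1}(s,a) = Qᴮ_k(s,a) + α_k·1{(s,a)=(s_k,a_k)}·(r(s_k,a_k,s'_k) + γ·max_{a'∈A} Qᴬ_k(s'_k,a') − Qᴮ_k(s_k,a_k) + β·(Qᴬ_k(s_k,a_k) − Qᴮ_k(s_k,a_k))). Then, with probability one, Qᴬ_k(s,a) → Q*(s,a)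 and Qᴮ_k(s,a) → Q*(s,a) as k → ∞ for every (s,a) ∈ S×A. -/

import Mathlib

open Finset

/-- Maximum of `Q s' a'` over actions `a'`. -/
noncomputable def maxQ {S A : Type*} [Fintype A] [Nonempty A]
    (Q : S → A → ℝ) (s' : S) : ℝ :=
  univ.sup' univ_nonempty (fun a' => Q s' a')

/-- The Bellman optimality operator. -/
noncomputable def bellmanT {S A : Type*} [Fintype S] [Fintype A] [Nonempty A]
    (P r : S → A → S → ℝ) (γ : ℝ) (Q : S → A → ℝ) : S → A → ℝ :=
  fun s a => ∑ s', P s a s' * (r s a s' + γ * maxQ Q s')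

/-- Sup norm on `ℝ^{S×A}`. -/
noncomputable def supNorm {S A : Type*} [Fintype S] [Fintype A] [Nonempty S] [Nonempty A]
    (Q : S → A → ℝ) : ℝ :=
  univ.sup' univ_nonempty (fun p : S × A => |Q p.1 p.2|)

open Filter MeasureTheory ProbabilityTheory


-- ===== auxiliary lemmas =====
open Finset Filter MeasureTheory ProbabilityTheory Topology


lemma prodIco_tendsto_zero (b : ℕ → ℝ) (N : ℕ)
    (hb0 : ∀ k, N ≤ k → 0 ≤ b k) (hb1 : ∀ k, N ≤ k → b k ≤ 1)
    (hdiv : Tendsto (fun n => ∑ k ∈ Finset.range n, b k) atTop atTop) :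
    Tendsto (fun n => ∏ k ∈ Finset.Ico N n, (1 - b k)) atTop (𝓝 0) := by
  have h1 : ∀ n, 0 ≤ ∏ k ∈ Finset.Ico N n, (1 - b k) := fun n =>
    Finset.prod_nonneg fun k hk => by
      have := hb1 k (Finset.mem_Ico.1 hk).1; linarith
  have h2 : ∀ n, ∏ k ∈ Finset.Ico N n, (1 - b k) ≤
      Real.exp (-(∑ k ∈ Finset.Ico N n, b k)) := by
    intro n
    have he : Real.exp (-(∑ k ∈ Finset.Ico N n, b k)) =
        ∏ k ∈ Finset.Ico N n, Real.exp (-(b k)) := by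
      rw [← Real.exp_sum]
      congr 1
      rw [Finset.sum_neg_distrib]
    rw [he]
    refine Finset.prod_le_prod (fun k hk => ?_) (fun k hk => ?_)
    · have := hb1 k (Finset.mem_Ico.1 hk).1; linarith
    · have := Real.add_one_le_exp (-(b k)); linarith
  have h3 : Tendsto (fun n => Real.exp (-(∑ k ∈ Finset.Ico N n, b k))) atTop (𝓝 0) := by
    apply Real.tendsto_exp_atBot.comp
    apply tendsto_neg_atTop_atBot.comp
    have heq : ∀ᶠ n in atTop, (∑ k ∈ Finset.range n, b k) - (∑ k ∈ Finset.range N, b k)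
        = ∑ k ∈ Finset.Ico N n, b k := by
      filter_upwards [eventually_ge_atTop N] with n hn
      rw [Finset.sum_Ico_eq_sub _ hn]
    exact Tendsto.congr' heq (tendsto_atTop_add_const_right _ _ hdiv)
  exact squeeze_zero h1 h2 h3

lemma lemmaD {ι : Type*} [Fintype ι] [Nonempty ι]
    (e b u : ℕ → ι → ℝ) (κ : ℝ) (hκ0 : 0 ≤ κ) (hκ1 : κ < 1) (K0 : ℕ) (D : ℝ)
    (hb0 : ∀ k i, K0 ≤ k → 0 ≤ b k i) (hb1 : ∀ k i, K0 ≤ k → b k i ≤ 1)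
    (hdiv : ∀ i, Tendsto (fun n => ∑ k ∈ Finset.range n, b k i) atTop atTop)
    (hu : ∀ i, ∃ l, Tendsto (fun n => ∑ k ∈ Finset.range n, u k i) atTop (𝓝 l))
    (hD : ∀ k i, |e k i| ≤ D)
    (hrec : ∀ k i, K0 ≤ k →
      |e (k+1) i - (1 - b k i) * e k i - u k i| ≤
        b k i * κ * (Finset.univ.sup' Finset.univ_nonempty fun j => |e k j|)) :
    ∀ i, Tendsto (fun k => e k i) atTop (𝓝 0) := by
  set M : ℕ → ℝ := fun k => Finset.univ.sup' Finset.univ_nonempty fun j => |e k j| with hM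
  have hMle : ∀ k i, |e k i| ≤ M k := fun k i =>
    Finset.le_sup' (fun j => |e k j|) (Finset.mem_univ i)
  have hM0 : ∀ k, 0 ≤ M k := fun k =>
    le_trans (abs_nonneg (e k (Classical.arbitrary ι))) (hMle k _)
  have hMD : ∀ k, M k ≤ D := fun k =>
    Finset.sup'_le _ _ fun j _ => hD k j
  have hbdd : IsBoundedUnder (· ≤ ·) atTop M := Filter.isBoundedUnder_of ⟨D, hMD⟩
  have hcobdd : IsCoboundedUnder (· ≤ ·) atTop M :=
    IsBoundedUnder.isCoboundedUnder_le (Filter.isBoundedUnder_of ⟨0, fun k => hM0 k⟩)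
  set L : ℝ := limsup M atTop with hL
  have hL0 : 0 ≤ L := le_limsup_of_frequently_le
    ((Filter.Eventually.of_forall hM0).frequently) hbdd
  have claim : ∀ ε : ℝ, 0 < ε → ∀ D' : ℝ, 0 ≤ D' → (∀ᶠ k in atTop, M k ≤ D') →
      ∀ᶠ k in atTop, M k ≤ κ * D' + 3 * ε := by
    intro ε hε D' hD'0 hev
    have hi : ∀ i, ∀ᶠ k in atTop, |e k i| ≤ κ * D' + 3 * ε := by
      intro i
      obtain ⟨l, hl⟩ := hu i
      rw [eventually_atTop] at hev
      obtain ⟨K1, hK1⟩ := hev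
      have hl' : ∀ᶠ n in atTop, |(∑ k ∈ Finset.range n, u k i) - l| ≤ ε := by
        have := Metric.tendsto_atTop.1 hl
        obtain ⟨N0, hN0⟩ := this ε hε
        exact eventually_atTop.2 ⟨N0, fun n hn => le_of_lt (by
          have := hN0 n hn; rwa [Real.dist_eq] at this)⟩
      rw [eventually_atTop] at hl'
      obtain ⟨N0, hN0⟩ := hl'
      set N := max (max K0 K1) N0 with hNdef
      have hNK0 : K0 ≤ N := le_trans (le_max_left _ _) (le_max_left _ _)
      have hNK1 : K1 ≤ N := le_trans (le_max_right _ _) (le_max_left _ _)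
      have hNN0 : N0 ≤ N := le_max_right _ _
      set S : ℕ → ℝ := fun n => ∑ k ∈ Finset.range n, u k i with hS
      set φ : ℕ → ℝ := fun n => e n i - S n + l with hφ
      set C : ℝ := |φ N| with hC
      have hC0 : 0 ≤ C := abs_nonneg _
      have key : ∀ n, N ≤ n → |φ n| ≤ (κ * D' + ε) +
          (∏ j ∈ Finset.Ico N n, (1 - b j i)) * C := by
        intro n hn
        induction n, hn using Nat.le_induction with
        | base =>
          rw [Finset.Ico_self, Finset.prod_empty, one_mul]
          have : 0 ≤ κ * D' + ε := by positivity
          rw [← hC]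
          linarith
        | succ m hmN ih =>
          have hK0m : K0 ≤ m := le_trans hNK0 hmN
          have hb0m := hb0 m i hK0m
          have hb1m := hb1 m i hK0m
          have hMm : M m ≤ D' := hK1 m (le_trans hNK1 hmN)
          have hrecm := hrec m i hK0m
          have hSm : |S m - l| ≤ ε := hN0 m (le_trans hNN0 hmN)
          have hid : φ (m+1) = (e (m+1) i - (1 - b m i) * e m i - u m i)
              + (1 - b m i) * φ m - (b m i) * (S m - l) := by
            simp only [hφ, hS, Finset.sum_range_succ]
            ring
          have habs : |φ (m+1)| ≤ b m i * κ * M m + (1 - b m i) * |φ m| + b m i * ε := by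
            rw [hid]
            have h1 : |(e (m+1) i - (1 - b m i) * e m i - u m i) + (1 - b m i) * φ m
                - (b m i) * (S m - l)|
                ≤ |(e (m+1) i - (1 - b m i) * e m i - u m i) + (1 - b m i) * φ m|
                  + |(b m i) * (S m - l)| := abs_sub _ _
            have h2 : |(e (m+1) i - (1 - b m i) * e m i - u m i) + (1 - b m i) * φ m|
                ≤ |e (m+1) i - (1 - b m i) * e m i - u m i| + |(1 - b m i) * φ m| :=
              abs_add_le _ _
            have h3 : |(1 - b m i) * φ m| = (1 - b m i) * |φ m| := by
              rw [abs_mul, abs_of_nonneg (by linarith : (0:ℝ) ≤ 1 - b m i)]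
            have h4 : |(b m i) * (S m - l)| ≤ b m i * ε := by
              rw [abs_mul, abs_of_nonneg hb0m]
              exact mul_le_mul_of_nonneg_left hSm hb0m
            have h5 : |e (m+1) i - (1 - b m i) * e m i - u m i| ≤ b m i * κ * M m := hrecm
            linarith
          have hMmbd : b m i * κ * M m ≤ b m i * κ * D' :=
            mul_le_mul_of_nonneg_left hMm (by positivity)
          have hprod : ∏ j ∈ Finset.Ico N (m+1), (1 - b j i)
              = (∏ j ∈ Finset.Ico N m, (1 - b j i)) * (1 - b m i) := by
            rw [Finset.prod_Ico_succ_top hmN]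
          rw [hprod]
          have hπ0 : 0 ≤ ∏ j ∈ Finset.Ico N m, (1 - b j i) := by
            apply Finset.prod_nonneg
            intro j hj
            have := hb1 j i (le_trans hNK0 (Finset.mem_Ico.1 hj).1)
            linarith
          nlinarith [mul_le_mul_of_nonneg_left ih (by linarith : (0:ℝ) ≤ 1 - b m i)]
      have hπ : Tendsto (fun n => (∏ j ∈ Finset.Ico N n, (1 - b j i)) * C) atTop (𝓝 0) := by
        have := prodIco_tendsto_zero (fun k => b k i) N
          (fun k hk => hb0 k i (le_trans hNK0 hk)) (fun k hk => hb1 k i (le_trans hNK0 hk))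
          (hdiv i)
        simpa using this.mul_const C
      have hπε : ∀ᶠ n in atTop, (∏ j ∈ Finset.Ico N n, (1 - b j i)) * C ≤ ε := by
        filter_upwards [hπ.eventually (eventually_le_nhds hε)] with n hn using hn
      filter_upwards [hπε, eventually_ge_atTop N] with n hn hnN
      have h1 := key n hnN
      have h2 : |S n - l| ≤ ε := hN0 n (le_trans hNN0 hnN)
      have h3 : |e n i| ≤ |φ n| + |S n - l| := by
        have h4 : e n i = φ n + (S n - l) := by rw [hφ]; ring
        rw [h4]
        exact abs_add_le _ _
      linarith
    have hall : ∀ᶠ k in atTop, ∀ i, |e k i| ≤ κ * D' + 3 * ε :=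
      (Filter.eventually_all).2 hi
    filter_upwards [hall] with k hk
    exact Finset.sup'_le _ _ fun j _ => hk j
  have hLκ : L ≤ κ * L := by
    have hstep : ∀ ε : ℝ, 0 < ε → L ≤ κ * L + (κ + 3) * ε := by
      intro ε hε
      have hev : ∀ᶠ k in atTop, M k ≤ L + ε := by
        have hlt : L < L + ε := by linarith
        filter_upwards [eventually_lt_of_limsup_lt hlt hbdd] with k hk using le_of_lt hk
      have h6 := claim ε hε (L + ε) (by linarith) hev
      have hle : L ≤ κ * (L + ε) + 3 * ε := limsup_le_of_le hcobdd h6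
      nlinarith
    by_contra hcon
    push_neg at hcon
    have hδ : 0 < (L - κ * L) / (2 * (κ + 3)) := by
      apply div_pos (by linarith) (by linarith)
    have h7 := hstep _ hδ
    have h8 : (κ + 3) * ((L - κ * L) / (2 * (κ + 3))) = (L - κ * L) / 2 := by
      field_simp
    nlinarith
  have hLle0 : L ≤ 0 := by nlinarith
  have hMtends : Tendsto M atTop (𝓝 0) := by
    rw [tendsto_order]
    constructor
    · intro c hc
      filter_upwards with k
      exact lt_of_lt_of_le hc (hM0 k)
    · intro c hc
      exact eventually_lt_of_limsup_lt (lt_of_le_of_lt hLle0 hc) hbdd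
  intro i
  exact squeeze_zero_norm (fun n => by simpa [Real.norm_eq_abs] using hMle n i) hMtends


lemma lemmaM {Ω : Type*} {m0 : MeasurableSpace Ω} {μ : Measure Ω} [IsProbabilityMeasure μ]
    (ℱ : Filtration ℕ m0) (f : ℕ → Ω → ℝ) (c : ℕ → ℝ)
    (hsum : Summable fun k => (c k)^2)
    (hmeas : ∀ k, StronglyMeasurable[ℱ (k+1)] (f k))
    (hbd : ∀ k ω, |f k ω| ≤ c k)
    (hcond : ∀ k, μ[f k | ℱ k] =ᵐ[μ] 0) :
    ∀ᵐ ω ∂μ, ∃ l, Tendsto (fun n => ∑ k ∈ Finset.range n, f k ω) atTop (𝓝 l) := by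
  set Mn : ℕ → Ω → ℝ := fun n ω => ∑ k ∈ Finset.range n, f k ω with hMn
  have hfmeas : ∀ k, StronglyMeasurable (f k) := fun k => (hmeas k).mono (ℱ.le (k+1))
  have hfint : ∀ k, Integrable (f k) μ := fun k =>
    Integrable.mono' (integrable_const (c k)) (hfmeas k).aestronglyMeasurable
      (Filter.Eventually.of_forall fun ω => by
        simpa [Real.norm_eq_abs] using hbd k ω)
  have hMmeas : ∀ n, StronglyMeasurable[ℱ n] (Mn n) := by
    intro n
    apply Finset.stronglyMeasurable_fun_sum
    intro k hk
    exact (hmeas k).mono (ℱ.mono (Finset.mem_range.1 hk))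
  have hMint : ∀ n, Integrable (Mn n) μ := fun n =>
    integrable_finset_sum _ fun k _ => hfint k
  have hadp : StronglyAdapted ℱ Mn := fun n => hMmeas n
  have hmart : Martingale Mn ℱ μ := by
    apply martingale_nat hadp hMint
    intro n
    have hsucc : Mn (n+1) = Mn n + f n := by
      funext ω
      simp [hMn, Finset.sum_range_succ]
    rw [hsucc]
    have h1 : μ[Mn n + f n | ℱ n] =ᵐ[μ] μ[Mn n | ℱ n] + μ[f n | ℱ n] :=
      condExp_add (hMint n) (hfint n) _
    have h2 : μ[Mn n | ℱ n] = Mn n :=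
      condExp_of_stronglyMeasurable (ℱ.le n) (hMmeas n) (hMint n)
    filter_upwards [h1, hcond n] with ω e1 e3
    simp [e1, h2, e3]
  -- orthogonality: ∫ Mn n * f n = 0
  have horth : ∀ n, ∫ ω, Mn n ω * f n ω ∂μ = 0 := by
    intro n
    have hMbd : ∀ ω, |Mn n ω| ≤ ∑ k ∈ Finset.range n, c k := by
      intro ω
      refine (Finset.abs_sum_le_sum_abs _ _).trans ?_
      exact Finset.sum_le_sum fun k _ => hbd k ω
    have hint2 : Integrable (fun ω => Mn n ω * f n ω) μ := by
      refine Integrable.mono' (integrable_const (max (∑ k ∈ Finset.range n, c k) 0 * c n))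
        (((hMmeas n).mono (ℱ.le n)).aestronglyMeasurable.mul (hfmeas n).aestronglyMeasurable)
        (Filter.Eventually.of_forall fun ω => ?_)
      rw [Real.norm_eq_abs, abs_mul]
      have h1 := hMbd ω
      have h2 := hbd n ω
      have h3 : (0:ℝ) ≤ |f n ω| := abs_nonneg _
      have h4 : (0:ℝ) ≤ |Mn n ω| := abs_nonneg _
      have : |Mn n ω| ≤ max (∑ k ∈ Finset.range n, c k) 0 := le_trans h1 (le_max_left _ _)
      exact mul_le_mul this h2 h3 (le_max_right _ _)
    have hpull : μ[(fun ω => Mn n ω * f n ω) | ℱ n] =ᵐ[μ] fun ω => Mn n ω * (μ[f n | ℱ n]) ω := by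
      have := condExp_mul_of_stronglyMeasurable_left (hMmeas n) (by exact hint2) (hfint n)
      exact this
    have hzero : μ[(fun ω => Mn n ω * f n ω) | ℱ n] =ᵐ[μ] 0 := by
      filter_upwards [hpull, hcond n] with ω e1 e2
      simp [e1, e2]
    calc ∫ ω, Mn n ω * f n ω ∂μ
        = ∫ ω, (μ[(fun ω => Mn n ω * f n ω) | ℱ n]) ω ∂μ := (integral_condExp (ℱ.le n)).symm
      _ = ∫ ω, (0:ℝ) ∂μ := integral_congr_ae hzero
      _ = 0 := integral_zero _ _
  -- second moments
  set V : ℝ := ∑' k, (c k)^2 with hV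
  have hcsq : ∀ n, ∑ k ∈ Finset.range n, (c k)^2 ≤ V :=
    fun n => Summable.sum_le_tsum _ (fun k _ => sq_nonneg _) hsum
  have hsqint : ∀ n, Integrable (fun ω => (Mn n ω)^2) μ := by
    intro n
    have hm2 : AEStronglyMeasurable (fun ω => (Mn n ω)^2) μ := by
      have h := (((hMmeas n).mono (ℱ.le n)).mul ((hMmeas n).mono (ℱ.le n))).aestronglyMeasurable (μ := μ)
      simp only [pow_two]; exact h
    refine Integrable.mono' (integrable_const ((∑ k ∈ Finset.range n, c k)^2)) hm2
      (Filter.Eventually.of_forall fun ω => ?_)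
    rw [Real.norm_eq_abs, abs_of_nonneg (sq_nonneg _)]
    have h1 : |Mn n ω| ≤ ∑ k ∈ Finset.range n, c k := by
      refine (Finset.abs_sum_le_sum_abs _ _).trans ?_
      exact Finset.sum_le_sum fun k _ => hbd k ω
    calc (Mn n ω)^2 = |Mn n ω|^2 := (sq_abs _).symm
      _ ≤ (∑ k ∈ Finset.range n, c k)^2 := by
          apply pow_le_pow_left₀ (abs_nonneg _) h1
  have hM2 : ∀ n, ∫ ω, (Mn n ω)^2 ∂μ ≤ ∑ k ∈ Finset.range n, (c k)^2 := by
    intro n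
    induction n with
    | zero => simp [hMn]
    | succ m ih =>
      have hexp : ∀ ω, (Mn (m+1) ω)^2 = (Mn m ω)^2 + 2 * (Mn m ω * f m ω) + (f m ω)^2 := by
        intro ω
        simp only [hMn, Finset.sum_range_succ]
        ring
      have hintMf : Integrable (fun ω => Mn m ω * f m ω) μ := by
        refine Integrable.mono' (integrable_const (max (∑ k ∈ Finset.range m, c k) 0 * c m))
          (((hMmeas m).mono (ℱ.le m)).aestronglyMeasurable.mul (hfmeas m).aestronglyMeasurable)
          (Filter.Eventually.of_forall fun ω => ?_)
        rw [Real.norm_eq_abs, abs_mul]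
        have h1 : |Mn m ω| ≤ ∑ k ∈ Finset.range m, c k := by
          refine (Finset.abs_sum_le_sum_abs _ _).trans ?_
          exact Finset.sum_le_sum fun k _ => hbd k ω
        exact mul_le_mul (le_trans h1 (le_max_left _ _)) (hbd m ω) (abs_nonneg _)
          (le_max_right _ _)
      have hintf2 : Integrable (fun ω => (f m ω)^2) μ := by
        have hf2 : AEStronglyMeasurable (fun ω => (f m ω)^2) μ := by
          have h := ((hfmeas m).mul (hfmeas m)).aestronglyMeasurable (μ := μ)
          simp only [pow_two]; exact h
        refine Integrable.mono' (integrable_const ((c m)^2)) hf2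
          (Filter.Eventually.of_forall fun ω => ?_)
        rw [Real.norm_eq_abs, abs_of_nonneg (sq_nonneg _), ← sq_abs]
        exact pow_le_pow_left₀ (abs_nonneg _) (hbd m ω) 2
      have hintf2' : ∫ ω, (f m ω)^2 ∂μ ≤ (c m)^2 := by
        calc ∫ ω, (f m ω)^2 ∂μ ≤ ∫ _ω, (c m)^2 ∂μ := by
              refine integral_mono hintf2 (integrable_const _) fun ω => ?_
              rw [← sq_abs]
              exact pow_le_pow_left₀ (abs_nonneg _) (hbd m ω) 2
          _ = (c m)^2 := by simp
      have heq : ∫ ω, (Mn (m+1) ω)^2 ∂μ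
          = ∫ ω, (Mn m ω)^2 ∂μ + 2 * ∫ ω, Mn m ω * f m ω ∂μ + ∫ ω, (f m ω)^2 ∂μ := by
        have e1 : ∫ ω, (Mn (m+1) ω)^2 ∂μ
            = ∫ ω, ((Mn m ω)^2 + 2 * (Mn m ω * f m ω)) + (f m ω)^2 ∂μ := by
          apply integral_congr_ae
          filter_upwards with ω
          rw [hexp ω]
        have e2 : ∫ ω, ((Mn m ω)^2 + 2 * (Mn m ω * f m ω)) + (f m ω)^2 ∂μ
            = (∫ ω, (Mn m ω)^2 + 2 * (Mn m ω * f m ω) ∂μ) + ∫ ω, (f m ω)^2 ∂μ :=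
          integral_add ((hsqint m).add (hintMf.const_mul 2)) hintf2
        have e3 : ∫ ω, (Mn m ω)^2 + 2 * (Mn m ω * f m ω) ∂μ
            = (∫ ω, (Mn m ω)^2 ∂μ) + ∫ ω, 2 * (Mn m ω * f m ω) ∂μ :=
          integral_add (hsqint m) (hintMf.const_mul 2)
        have e4 : ∫ ω, 2 * (Mn m ω * f m ω) ∂μ = 2 * ∫ ω, Mn m ω * f m ω ∂μ :=
          integral_const_mul 2 _
        rw [e1, e2, e3, e4]
      rw [heq, horth m, Finset.sum_range_succ]
      linarith
  -- L1 bound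
  have hL1 : ∀ n, eLpNorm (Mn n) 1 μ ≤ ENNReal.ofReal ((V + 1)/2) := by
    intro n
    have habs : Integrable (fun ω => |Mn n ω|) μ := (hMint n).abs
    have h1 : ∫ ω, |Mn n ω| ∂μ ≤ (V + 1)/2 := by
      have hpt : ∀ ω, |Mn n ω| ≤ ((Mn n ω)^2 + 1)/2 := by
        intro ω
        nlinarith [sq_nonneg (|Mn n ω| - 1), sq_abs (Mn n ω)]
      calc ∫ ω, |Mn n ω| ∂μ ≤ ∫ ω, ((Mn n ω)^2 + 1)/2 ∂μ := by
            refine integral_mono habs ?_ hpt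
            exact ((hsqint n).add (integrable_const 1)).div_const 2
        _ = ((∫ ω, (Mn n ω)^2 ∂μ) + 1)/2 := by
            rw [integral_div, integral_add (hsqint n) (integrable_const 1)]
            simp
        _ ≤ (V + 1)/2 := by
            have := (hM2 n).trans (hcsq n)
            linarith
    have h2 : eLpNorm (Mn n) 1 μ = ENNReal.ofReal (∫ ω, ‖Mn n ω‖ ∂μ) := by
      rw [eLpNorm_one_eq_lintegral_enorm,
        ← ofReal_integral_norm_eq_lintegral_enorm (hMint n)]
    rw [h2]
    apply ENNReal.ofReal_le_ofReal
    simpa [Real.norm_eq_abs] using h1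
  -- conclude
  have hfin := hmart.submartingale.exists_ae_tendsto_of_bdd
    (R := Real.toNNReal ((V + 1)/2)) fun n => hL1 n
  filter_upwards [hfin] with ω hω
  exact hω

section helpers
variable {S A : Type*} [Fintype S] [Fintype A] [Nonempty S] [Nonempty A]

lemma abs_le_supNorm (Q : S → A → ℝ) (s : S) (a : A) : |Q s a| ≤ supNorm Q :=
  Finset.le_sup' (fun p : S × A => |Q p.1 p.2|) (Finset.mem_univ (s, a))

lemma supNorm_nonneg (Q : S → A → ℝ) : 0 ≤ supNorm Q :=
  le_trans (abs_nonneg _) (abs_le_supNorm Q (Classical.arbitrary S) (Classical.arbitrary A))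

lemma sup'_sub_sup'_abs_le {ι : Type*} (s : Finset ι) (hs : s.Nonempty) (f g : ι → ℝ) (c : ℝ)
    (h : ∀ x ∈ s, |f x - g x| ≤ c) : |s.sup' hs f - s.sup' hs g| ≤ c := by
  rw [abs_sub_le_iff]
  constructor
  · rw [sub_le_iff_le_add]
    refine Finset.sup'_le _ _ fun x hx => ?_
    have h1 := h x hx
    have h2 : g x ≤ s.sup' hs g := Finset.le_sup' _ hx
    rw [abs_sub_le_iff] at h1
    linarith [h1.1]
  · rw [sub_le_iff_le_add]
    refine Finset.sup'_le _ _ fun x hx => ?_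
    have h1 := h x hx
    have h2 : f x ≤ s.sup' hs f := Finset.le_sup' _ hx
    rw [abs_sub_le_iff] at h1
    linarith [h1.2]

lemma abs_maxQ_le (Q : S → A → ℝ) (s' : S) (c : ℝ) (h : ∀ s a, |Q s a| ≤ c) :
    |maxQ Q s'| ≤ c := by
  rw [abs_le]
  constructor
  · have := h s' (Classical.arbitrary A)
    have h2 : Q s' (Classical.arbitrary A) ≤ maxQ Q s' :=
      Finset.le_sup' (fun a' => Q s' a') (Finset.mem_univ _)
    rw [abs_le] at this
    linarith [this.1]
  · refine Finset.sup'_le _ _ fun a _ => ?_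
    have := h s' a
    rw [abs_le] at this
    exact this.2

lemma maxQ_diff_le (Q Q' : S → A → ℝ) (s' : S) (c : ℝ) (h : ∀ s a, |Q s a - Q' s a| ≤ c) :
    |maxQ Q s' - maxQ Q' s'| ≤ c :=
  sup'_sub_sup'_abs_le _ _ _ _ c fun a _ => h s' a

lemma bellmanT_contract (P r : S → A → S → ℝ) (γ : ℝ) (hγ0 : 0 ≤ γ)
    (hP0 : ∀ s a s', 0 ≤ P s a s') (hP1 : ∀ s a, ∑ s', P s a s' = 1)
    (Q Q' : S → A → ℝ) (s : S) (a : A) (c : ℝ) (hc : ∀ s a, |Q s a - Q' s a| ≤ c) :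
    |bellmanT P r γ Q s a - bellmanT P r γ Q' s a| ≤ γ * c := by
  have hdiff : bellmanT P r γ Q s a - bellmanT P r γ Q' s a
      = ∑ s', P s a s' * (γ * (maxQ Q s' - maxQ Q' s')) := by
    unfold bellmanT
    rw [← Finset.sum_sub_distrib]
    congr 1
    funext s'
    ring
  rw [hdiff]
  calc |∑ s', P s a s' * (γ * (maxQ Q s' - maxQ Q' s'))|
      ≤ ∑ s', |P s a s' * (γ * (maxQ Q s' - maxQ Q' s'))| := Finset.abs_sum_le_sum_abs _ _
    _ ≤ ∑ s', P s a s' * (γ * c) := by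
        refine Finset.sum_le_sum fun s' _ => ?_
        rw [abs_mul, abs_of_nonneg (hP0 s a s'), abs_mul, abs_of_nonneg hγ0]
        refine mul_le_mul_of_nonneg_left ?_ (hP0 s a s')
        exact mul_le_mul_of_nonneg_left (maxQ_diff_le Q Q' s' c hc) hγ0
    _ = γ * c := by rw [← Finset.sum_mul, hP1 s a, one_mul]

lemma measurable_sup'_fun {Ω ι : Type*} {m : MeasurableSpace Ω} (s : Finset ι) (hs : s.Nonempty)
    (f : ι → Ω → ℝ) (hf : ∀ i, Measurable[m] (f i)) :
    Measurable[m] (fun ω => s.sup' hs fun i => f i ω) := by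
  have h : Measurable[m] (s.sup' hs f) := Finset.measurable_sup' hs (fun i _ => hf i)
  have he : (s.sup' hs f) = fun ω => s.sup' hs fun i => f i ω :=
    funext fun ω => Finset.sup'_apply hs f ω
  rwa [he] at h

end helpers

set_option maxHeartbeats 2000000 in
theorem sgt2_ql_convergence
    {S A : Type*} [Fintype S] [Fintype A] [Nonempty S] [Nonempty A]
    [DecidableEq S] [DecidableEq A]
    [MeasurableSpace S] [MeasurableSingletonClass S]
    [MeasurableSpace A] [MeasurableSingletonClass A]
    (P r : S → A → S → ℝ) (γ : ℝ) (hγ0 : 0 ≤ γ) (hγ1 : γ < 1)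
    (hP0 : ∀ s a s', 0 ≤ P s a s') (hP1 : ∀ s a, ∑ s', P s a s' = 1)
    (Qstar : S → A → ℝ) (hQstar : bellmanT P r γ Qstar = Qstar)
    (β : ℝ) (hβ : 0 < β)
    (α : ℕ → ℝ) (hα01 : ∀ k, 0 ≤ α k ∧ α k ≤ 1)
    (hαdiv : Tendsto (fun n => ∑ k ∈ Finset.range n, α k) atTop atTop)
    (hαsq : Summable fun k => (α k) ^ 2)
    (d : S → A → ℝ) (hd : ∀ s a, 0 < d s a)
    {Ω : Type*} [MeasurableSpace Ω] (μ : Measure Ω) [IsProbabilityMeasure μ]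
    (X : ℕ → Ω → S × A × S)
    (hXmeas : ∀ k, Measurable (X k))
    (hXindep : iIndepFun X μ)
    (hXlaw : ∀ k (s : S) (a : A) (s' : S),
      μ {ω | X k ω = (s, a, s')} = ENNReal.ofReal (d s a * P s a s'))
    (QA QB : ℕ → Ω → S → A → ℝ) (QA0 QB0 : S → A → ℝ)
    (hQA0 : ∀ ω, QA 0 ω = QA0) (hQB0 : ∀ ω, QB 0 ω = QB0)
    (hQArec : ∀ k ω s a, QA (k + 1) ω s a = QA k ω s a +
      α k * (if s = (X k ω).1 ∧ a = (X k ω).2.1 then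
          r (X k ω).1 (X k ω).2.1 (X k ω).2.2 + γ * maxQ (QB k ω) (X k ω).2.2 -
            QA k ω (X k ω).1 (X k ω).2.1 +
            β * (QB k ω (X k ω).1 (X k ω).2.1 - QA k ω (X k ω).1 (X k ω).2.1)
        else 0))
    (hQBrec : ∀ k ω s a, QB (k + 1) ω s a = QB k ω s a +
      α k * (if s = (X k ω).1 ∧ a = (X k ω).2.1 then
          r (X k ω).1 (X k ω).2.1 (X k ω).2.2 + γ * maxQ (QA k ω) (X k ω).2.2 -
            QB k ω (X k ω).1 (X k ω).2.1 +
            β * (QA k ω (X k ω).1 (X k ω).2.1 - QB k ω (X k ω).1 (X k ω).2.1)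
        else 0)) :
    ∀ᵐ ω ∂μ, ∀ s a,
      Tendsto (fun k => QA k ω s a) atTop (nhds (Qstar s a)) ∧
      Tendsto (fun k => QB k ω s a) atTop (nhds (Qstar s a)) := by
  classical
  -- Step 0: constants
  set R : ℝ := Finset.univ.sup' Finset.univ_nonempty
    (fun x : S × A × S => |r x.1 x.2.1 x.2.2|) with hRdef
  have hR : ∀ s a s', |r s a s'| ≤ R := fun s a s' =>
    Finset.le_sup' (fun x : S × A × S => |r x.1 x.2.1 x.2.2|) (Finset.mem_univ (s, a, s'))
  have hR0 : 0 ≤ R := le_trans (abs_nonneg _) (hR (Classical.arbitrary S)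
    (Classical.arbitrary A) (Classical.arbitrary S))
  have hα0 : ∀ k, 0 ≤ α k := fun k => (hα01 k).1
  have hα1 : ∀ k, α k ≤ 1 := fun k => (hα01 k).2
  -- α → 0 and choice of K0
  have hαto0 : Tendsto α atTop (nhds 0) := by
    have h1 : Tendsto (fun k => (α k)^2) atTop (nhds 0) := hαsq.tendsto_atTop_zero
    have h2 := (Real.continuous_sqrt.tendsto 0).comp h1
    simp only [Real.sqrt_zero] at h2
    refine h2.congr fun k => ?_
    simp [Real.sqrt_sq (hα0 k)]
  obtain ⟨K0, hK0⟩ : ∃ K0, ∀ k, K0 ≤ k → (1 + β) * α k ≤ 1 := by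
    have hpos : (0:ℝ) < 1 / (1 + β) := by positivity
    have := hαto0.eventually (eventually_le_nhds hpos)
    rw [eventually_atTop] at this
    obtain ⟨K0, hK⟩ := this
    refine ⟨K0, fun k hk => ?_⟩
    have := hK k hk
    rw [le_div_iff₀ (by linarith : (0:ℝ) < 1 + β)] at this
    linarith
  -- Step 2: uniform bound
  set m : ℕ → Ω → ℝ := fun k ω => max (supNorm (QA k ω)) (supNorm (QB k ω)) with hmdef
  have hm0 : ∀ k ω, 0 ≤ m k ω := fun k ω => le_trans (supNorm_nonneg _) (le_max_left _ _)
  have hmQA : ∀ k ω s a, |QA k ω s a| ≤ m k ω := fun k ω s a =>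
    le_trans (abs_le_supNorm _ s a) (le_max_left _ _)
  have hmQB : ∀ k ω s a, |QB k ω s a| ≤ m k ω := fun k ω s a =>
    le_trans (abs_le_supNorm _ s a) (le_max_right _ _)
  -- growth bound for all k
  have hgrow : ∀ k ω, m (k+1) ω ≤ (2 + γ + 2*β) * m k ω + R := by
    intro k ω
    have hbound : ∀ (Q Q' : ℕ → Ω → S → A → ℝ),
        (∀ s a, |Q k ω s a| ≤ m k ω) → (∀ s a, |Q' k ω s a| ≤ m k ω) →
        (∀ s a, Q (k+1) ω s a = Q k ω s a +
          α k * (if s = (X k ω).1 ∧ a = (X k ω).2.1 then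
            r (X k ω).1 (X k ω).2.1 (X k ω).2.2 + γ * maxQ (Q' k ω) (X k ω).2.2 -
              Q k ω (X k ω).1 (X k ω).2.1 +
              β * (Q' k ω (X k ω).1 (X k ω).2.1 - Q k ω (X k ω).1 (X k ω).2.1)
          else 0)) →
        supNorm (Q (k+1) ω) ≤ (2 + γ + 2*β) * m k ω + R := by
      intro Q Q' hQ hQ' hrec
      refine Finset.sup'_le _ _ fun p _ => ?_
      rw [hrec p.1 p.2]
      have hite : |(if p.1 = (X k ω).1 ∧ p.2 = (X k ω).2.1 then
          r (X k ω).1 (X k ω).2.1 (X k ω).2.2 + γ * maxQ (Q' k ω) (X k ω).2.2 -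
            Q k ω (X k ω).1 (X k ω).2.1 +
            β * (Q' k ω (X k ω).1 (X k ω).2.1 - Q k ω (X k ω).1 (X k ω).2.1)
          else 0)| ≤ R + (1 + γ + 2*β) * m k ω := by
        split
        · have h1 := hR (X k ω).1 (X k ω).2.1 (X k ω).2.2
          have h2 : |maxQ (Q' k ω) (X k ω).2.2| ≤ m k ω := abs_maxQ_le _ _ _ hQ'
          have h3 := hQ (X k ω).1 (X k ω).2.1
          have h4 := hQ' (X k ω).1 (X k ω).2.1
          have habs : ∀ x y z w : ℝ, |x + y - z + β * (w - z)| ≤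
              |x| + |y| + |z| + β * (|w| + |z|) := by
            intro x y z w
            have h5 : |x + y - z + β*(w - z)| ≤ |x + y - z| + |β*(w-z)| := abs_add_le _ _
            have h6 : |x + y - z| ≤ |x + y| + |z| := abs_sub _ _
            have h7 : |x + y| ≤ |x| + |y| := abs_add_le _ _
            have h8 : |β*(w-z)| = β * |w - z| := by
              rw [abs_mul, abs_of_nonneg (le_of_lt hβ)]
            have h9 : |w - z| ≤ |w| + |z| := abs_sub _ _
            nlinarith
          calc |r (X k ω).1 (X k ω).2.1 (X k ω).2.2 + γ * maxQ (Q' k ω) (X k ω).2.2 -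
              Q k ω (X k ω).1 (X k ω).2.1 +
              β * (Q' k ω (X k ω).1 (X k ω).2.1 - Q k ω (X k ω).1 (X k ω).2.1)|
              ≤ |r (X k ω).1 (X k ω).2.1 (X k ω).2.2| + |γ * maxQ (Q' k ω) (X k ω).2.2|
                + |Q k ω (X k ω).1 (X k ω).2.1|
                + β * (|Q' k ω (X k ω).1 (X k ω).2.1| + |Q k ω (X k ω).1 (X k ω).2.1|) :=
                habs _ _ _ _
            _ ≤ R + (1 + γ + 2*β) * m k ω := by
                rw [abs_mul, abs_of_nonneg hγ0]
                have := mul_le_mul_of_nonneg_left h2 hγ0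
                nlinarith [hm0 k ω]
        · simp
          nlinarith [hm0 k ω, hR0, hβ.le, hγ0]
      obtain ⟨t, ht, htb⟩ : ∃ t : ℝ, (Q (k+1) ω p.1 p.2 = Q k ω p.1 p.2 + α k * t) ∧
          |t| ≤ R + (1 + γ + 2*β) * m k ω := ⟨_, hrec p.1 p.2, hite⟩
      rw [show Q k ω p.1 p.2 +
          α k * (if p.1 = (X k ω).1 ∧ p.2 = (X k ω).2.1 then
            r (X k ω).1 (X k ω).2.1 (X k ω).2.2 + γ * maxQ (Q' k ω) (X k ω).2.2 -
              Q k ω (X k ω).1 (X k ω).2.1 +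
              β * (Q' k ω (X k ω).1 (X k ω).2.1 - Q k ω (X k ω).1 (X k ω).2.1)
          else 0) = Q (k+1) ω p.1 p.2 from (hrec p.1 p.2).symm, ht]
      have h5 : |Q k ω p.1 p.2 + α k * t| ≤ |Q k ω p.1 p.2| + α k * |t| := by
        have := abs_add_le (Q k ω p.1 p.2) (α k * t)
        rw [abs_mul, abs_of_nonneg (hα0 k)] at this
        exact this
      have h6 : α k * |t| ≤ 1 * (R + (1 + γ + 2*β) * m k ω) :=
        mul_le_mul (hα1 k) htb (abs_nonneg _) zero_le_one
      have h7 := hQ p.1 p.2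
      nlinarith [hm0 k ω]
    have hA := hbound QA QB (hmQA k ω) (hmQB k ω) (fun s a => hQArec k ω s a)
    have hB := hbound QB QA (hmQB k ω) (hmQA k ω) (fun s a => hQBrec k ω s a)
    exact max_le hA hB
  -- phase 1 bound
  set G : ℕ → ℝ := fun k => (2 + γ + 2*β)^k * (max (supNorm QA0) (supNorm QB0)) +
    (((2 + γ + 2*β)^k - 1) / (1 + γ + 2*β)) * R with hGdef
  have hcoef : (1:ℝ) < 2 + γ + 2*β := by linarith
  have hG0 : ∀ k, 0 ≤ G k := by
    intro k
    have h1 : (1:ℝ) ≤ (2 + γ + 2*β)^k := one_le_pow₀ hcoef.le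
    have h2 : 0 ≤ max (supNorm QA0) (supNorm QB0) :=
      le_trans (supNorm_nonneg _) (le_max_left _ _)
    have h3 : 0 ≤ ((2 + γ + 2*β)^k - 1) / (1 + γ + 2*β) := by
      apply div_nonneg (by linarith) (by linarith)
    positivity
  have hGrec : ∀ k, (2 + γ + 2*β) * G k + R = G (k+1) := by
    intro k
    rw [hGdef]
    simp only [pow_succ]
    field_simp
    ring
  have hGmono : ∀ j k, j ≤ k → G j ≤ G k := by
    intro j k hjk
    induction k, hjk using Nat.le_induction with
    | base => exact le_refl _
    | succ n hn ih =>
      refine le_trans ih ?_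
      rw [← hGrec n]
      nlinarith [hG0 n, hR0]
  have hmG : ∀ ω k, m k ω ≤ G k := by
    intro ω k
    induction k with
    | zero =>
      rw [hmdef]
      simp only [hQA0 ω, hQB0 ω]
      rw [hGdef]
      simp
    | succ n ih =>
      have := hgrow n ω
      rw [← hGrec n]
      nlinarith [hm0 n ω]
  -- phase 2
  set B : ℝ := max (G K0) (R / (1 - γ)) with hBdef
  have hRB : R / (1 - γ) ≤ B := le_max_right _ _
  have hstep2 : ∀ k ω, K0 ≤ k → m (k+1) ω ≤ max (m k ω) (R / (1 - γ)) := by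
    intro k ω hk
    have hαβ := hK0 k hk
    have hbound : ∀ (Q Q' : ℕ → Ω → S → A → ℝ),
        (∀ s a, |Q k ω s a| ≤ m k ω) → (∀ s a, |Q' k ω s a| ≤ m k ω) →
        (∀ s a, Q (k+1) ω s a = Q k ω s a +
          α k * (if s = (X k ω).1 ∧ a = (X k ω).2.1 then
            r (X k ω).1 (X k ω).2.1 (X k ω).2.2 + γ * maxQ (Q' k ω) (X k ω).2.2 -
              Q k ω (X k ω).1 (X k ω).2.1 +
              β * (Q' k ω (X k ω).1 (X k ω).2.1 - Q k ω (X k ω).1 (X k ω).2.1)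
          else 0)) →
        supNorm (Q (k+1) ω) ≤ max (m k ω) (R / (1 - γ)) := by
      intro Q Q' hQ hQ' hrec
      refine Finset.sup'_le _ _ fun p _ => ?_
      rw [hrec p.1 p.2]
      by_cases hsel : p.1 = (X k ω).1 ∧ p.2 = (X k ω).2.1
      · rw [if_pos hsel]
        obtain ⟨hs1, hs2⟩ := hsel
        -- rewrite the selected entry
        have hkey : Q k ω p.1 p.2 +
            α k * (r (X k ω).1 (X k ω).2.1 (X k ω).2.2 + γ * maxQ (Q' k ω) (X k ω).2.2 -
              Q k ω (X k ω).1 (X k ω).2.1 +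
              β * (Q' k ω (X k ω).1 (X k ω).2.1 - Q k ω (X k ω).1 (X k ω).2.1))
            = (1 - (1+β) * α k) * Q k ω p.1 p.2 +
              α k * (r (X k ω).1 (X k ω).2.1 (X k ω).2.2 + γ * maxQ (Q' k ω) (X k ω).2.2 +
                β * Q' k ω p.1 p.2) := by
          rw [← hs1, ← hs2]
          ring
        rw [hkey]
        have h1 : |(1 - (1+β) * α k) * Q k ω p.1 p.2| ≤ (1 - (1+β) * α k) * m k ω := by
          rw [abs_mul, abs_of_nonneg (by linarith : (0:ℝ) ≤ 1 - (1+β) * α k)]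
          exact mul_le_mul_of_nonneg_left (hQ p.1 p.2) (by linarith)
        have h2 : |r (X k ω).1 (X k ω).2.1 (X k ω).2.2 + γ * maxQ (Q' k ω) (X k ω).2.2 +
            β * Q' k ω p.1 p.2| ≤ R + γ * m k ω + β * m k ω := by
          have ha := hR (X k ω).1 (X k ω).2.1 (X k ω).2.2
          have hb : |maxQ (Q' k ω) (X k ω).2.2| ≤ m k ω := abs_maxQ_le _ _ _ hQ'
          have hc := hQ' p.1 p.2
          have habs : ∀ x y z : ℝ, |x + y + z| ≤ |x| + |y| + |z| := fun x y z =>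
            le_trans (abs_add_le _ _) (by linarith [abs_add_le x y])
          have := habs (r (X k ω).1 (X k ω).2.1 (X k ω).2.2)
            (γ * maxQ (Q' k ω) (X k ω).2.2) (β * Q' k ω p.1 p.2)
          rw [abs_mul, abs_of_nonneg hγ0, abs_mul, abs_of_nonneg hβ.le] at this
          nlinarith [mul_le_mul_of_nonneg_left hb hγ0, mul_le_mul_of_nonneg_left hc hβ.le]
        have h3 : |(1 - (1+β) * α k) * Q k ω p.1 p.2 +
            α k * (r (X k ω).1 (X k ω).2.1 (X k ω).2.2 + γ * maxQ (Q' k ω) (X k ω).2.2 +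
              β * Q' k ω p.1 p.2)|
            ≤ (1 - (1+β) * α k) * m k ω + α k * (R + γ * m k ω + β * m k ω) := by
          refine le_trans (abs_add_le _ _) (add_le_add h1 ?_)
          rw [abs_mul, abs_of_nonneg (hα0 k)]
          exact mul_le_mul_of_nonneg_left h2 (hα0 k)
        refine le_trans h3 ?_
        have hsimp : (1 - (1+β) * α k) * m k ω + α k * (R + γ * m k ω + β * m k ω)
            = m k ω + α k * (R - (1 - γ) * m k ω) := by ring
        rw [hsimp]
        rcases le_or_gt (m k ω) (R / (1 - γ)) with hcase | hcase
        · have h4 : 0 ≤ R - (1 - γ) * m k ω := by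
            rw [le_div_iff₀ (by linarith : (0:ℝ) < 1 - γ)] at hcase
            linarith
          have h5 : m k ω + α k * (R - (1 - γ) * m k ω) ≤ m k ω + 1 * (R - (1 - γ) * m k ω) :=
            add_le_add le_rfl (mul_le_mul_of_nonneg_right (hα1 k) h4)
          refine le_trans h5 (le_trans ?_ (le_max_right _ _))
          rw [le_div_iff₀ (by linarith : (0:ℝ) < 1 - γ)]
          nlinarith [hm0 k ω]
        · have h4 : R - (1 - γ) * m k ω ≤ 0 := by
            rw [div_lt_iff₀ (by linarith : (0:ℝ) < 1 - γ)] at hcase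
            nlinarith
          have h5 : α k * (R - (1 - γ) * m k ω) ≤ 0 :=
            mul_nonpos_of_nonneg_of_nonpos (hα0 k) h4
          refine le_trans ?_ (le_max_left _ _)
          linarith
      · rw [if_neg hsel]
        simp only [mul_zero, add_zero]
        exact le_trans (hQ p.1 p.2) (le_max_left _ _)
    exact max_le
      (hbound QA QB (hmQA k ω) (hmQB k ω) (fun s a => hQArec k ω s a))
      (hbound QB QA (hmQB k ω) (hmQA k ω) (fun s a => hQBrec k ω s a))
  have hmB : ∀ ω k, m k ω ≤ B := by
    intro ω k
    rcases le_or_gt k K0 with hk | hk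
    · exact le_trans (hmG ω k) (le_trans (hGmono k K0 hk) (le_max_left _ _))
    · have : ∀ j, K0 ≤ j → m j ω ≤ B := by
        intro j hj
        induction j, hj using Nat.le_induction with
        | base => exact le_trans (hmG ω K0) (le_max_left _ _)
        | succ n hn ih =>
          refine le_trans (hstep2 n ω hn) ?_
          exact max_le ih hRB
      exact this k hk.le
  -- Step 3: filtration
  have hXkmeas : ∀ k, ∀ x : S × A × S, MeasurableSet[MeasurableSpace.comap (X k) inferInstance]
      ((X k) ⁻¹' {x}) := fun k x => ⟨{x}, MeasurableSet.singleton x, rfl⟩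
  set F : Filtration ℕ ‹MeasurableSpace Ω› :=
    { seq := fun n => ⨆ k ∈ Finset.range n, MeasurableSpace.comap (X k) inferInstance
      mono' := by
        intro i j hij
        exact biSup_mono fun k hk => Finset.mem_range.2 (lt_of_lt_of_le (Finset.mem_range.1 hk) hij)
      le' := by
        intro n
        refine iSup₂_le fun k _ => ?_
        exact (hXmeas k).comap_le } with hFdef
  have hFcomap : ∀ k n, k < n → MeasurableSpace.comap (X k) inferInstance ≤ F n := by
    intro k n hkn
    show MeasurableSpace.comap (X k) inferInstance ≤
      ⨆ j ∈ Finset.range n, MeasurableSpace.comap (X j) inferInstance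
    exact le_biSup (fun j => MeasurableSpace.comap (X j) inferInstance)
      (Finset.mem_range.2 hkn)
  have hXFmeas : ∀ k n, k < n → Measurable[F n] (X k) := by
    intro k n hkn
    exact (Measurable.of_comap_le le_rfl).mono (hFcomap k n hkn) le_rfl
  -- any function of finitely many discrete values is measurable
  have hdisc : ∀ (φ : S × A × S → ℝ), Measurable φ := fun φ => measurable_of_countable φ
  -- adaptedness of QA QB
  have hQmeas : ∀ k, ∀ s a, Measurable[F k] (fun ω => QA k ω s a) ∧
      Measurable[F k] (fun ω => QB k ω s a) := by
    intro k
    induction k with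
    | zero =>
      intro s a
      constructor
      · have : (fun ω => QA 0 ω s a) = fun _ => QA0 s a := funext fun ω => by rw [hQA0 ω]
        rw [this]; exact measurable_const
      · have : (fun ω => QB 0 ω s a) = fun _ => QB0 s a := funext fun ω => by rw [hQB0 ω]
        rw [this]; exact measurable_const
    | succ k ih =>
      have hmono : ∀ (g : Ω → ℝ), Measurable[F k] g → Measurable[F (k+1)] g :=
        fun g hg => hg.mono (F.mono (Nat.le_succ k)) le_rfl
      have hmaxQ : ∀ (Q : ℕ → Ω → S → A → ℝ),
          (∀ s a, Measurable[F k] (fun ω => Q k ω s a)) → ∀ σ : S,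
          Measurable[F (k+1)] (fun ω => maxQ (Q k ω) σ) := by
        intro Q hQ σ
        exact hmono _ (measurable_sup'_fun _ _ (fun a' ω => Q k ω σ a') (fun a' => hQ σ a'))
      have key : ∀ (Q Q' : ℕ → Ω → S → A → ℝ),
          (∀ s a, Measurable[F k] (fun ω => Q k ω s a)) →
          (∀ s a, Measurable[F k] (fun ω => Q' k ω s a)) →
          (∀ s a ω, Q (k+1) ω s a = Q k ω s a +
            α k * (if s = (X k ω).1 ∧ a = (X k ω).2.1 then
              r (X k ω).1 (X k ω).2.1 (X k ω).2.2 + γ * maxQ (Q' k ω) (X k ω).2.2 -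
                Q k ω (X k ω).1 (X k ω).2.1 +
                β * (Q' k ω (X k ω).1 (X k ω).2.1 - Q k ω (X k ω).1 (X k ω).2.1)
            else 0)) →
          ∀ s a, Measurable[F (k+1)] (fun ω => Q (k+1) ω s a) := by
        intro Q Q' hQ hQ' hrec s a
        have hdecomp : (fun ω => Q (k+1) ω s a) = fun ω =>
            Q k ω s a + α k * (∑ x : S × A × S,
              Set.indicator ((X k) ⁻¹' {x}) (fun ω' =>
                if s = x.1 ∧ a = x.2.1 then
                  r x.1 x.2.1 x.2.2 + γ * maxQ (Q' k ω') x.2.2 - Q k ω' x.1 x.2.1 +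
                    β * (Q' k ω' x.1 x.2.1 - Q k ω' x.1 x.2.1)
                else 0) ω) := by
          funext ω
          rw [hrec s a ω]
          congr 1
          congr 1
          have hsum : ∑ x : S × A × S,
              Set.indicator ((X k) ⁻¹' {x}) (fun ω' =>
                if s = x.1 ∧ a = x.2.1 then
                  r x.1 x.2.1 x.2.2 + γ * maxQ (Q' k ω') x.2.2 - Q k ω' x.1 x.2.1 +
                    β * (Q' k ω' x.1 x.2.1 - Q k ω' x.1 x.2.1)
                else 0) ω
              = ∑ x : S × A × S, if x = X k ω then
                  (if s = x.1 ∧ a = x.2.1 then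
                    r x.1 x.2.1 x.2.2 + γ * maxQ (Q' k ω) x.2.2 - Q k ω x.1 x.2.1 +
                      β * (Q' k ω x.1 x.2.1 - Q k ω x.1 x.2.1)
                  else 0) else 0 := by
            refine Finset.sum_congr rfl fun x _ => ?_
            rw [Set.indicator_apply]
            simp only [Set.mem_preimage, Set.mem_singleton_iff]
            by_cases h : X k ω = x
            · rw [if_pos h, if_pos h.symm]
            · rw [if_neg h, if_neg (fun hh => h hh.symm)]
          rw [hsum, Finset.sum_ite_eq' Finset.univ (X k ω)]
          rw [if_pos (Finset.mem_univ _)]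
        rw [hdecomp]
        refine Measurable.add (hmono _ (hQ s a)) (Measurable.const_mul ?_ (α k))
        refine Finset.measurable_sum _ fun x _ => ?_
        refine Measurable.indicator ?_ ((hFcomap k (k+1) (Nat.lt_succ_self k)) _ (hXkmeas k x))
        split
        · refine Measurable.add (Measurable.sub (Measurable.add measurable_const
            ((hmaxQ Q' hQ' x.2.2).const_mul γ)) (hmono _ (hQ x.1 x.2.1))) ?_
          exact ((hmono _ (hQ' x.1 x.2.1)).sub (hmono _ (hQ x.1 x.2.1))).const_mul β
        · exact measurable_const
      intro s a
      constructor
      · exact key QA QB (fun s a => (ih s a).1) (fun s a => (ih s a).2)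
          (fun s a ω => hQArec k ω s a) s a
      · exact key QB QA (fun s a => (ih s a).2) (fun s a => (ih s a).1)
          (fun s a ω => hQBrec k ω s a) s a
  -- independence of comap (X n) from F n
  have hindep : ∀ n, Indep (MeasurableSpace.comap (X n) inferInstance) (F n) μ := by
    intro n
    have h := indep_iSup_of_disjoint (m := fun k => MeasurableSpace.comap (X k)
        (inferInstance : MeasurableSpace (S × A × S)))
      (fun k => (hXmeas k).comap_le) hXindep
      (S := {n}) (T := {k | k ∈ Finset.range n}) (by
        simp only [Set.disjoint_left, Set.mem_singleton_iff, Set.mem_setOf_eq,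
          Finset.mem_range]
        rintro x rfl
        omega)
    have h1 : (⨆ k ∈ ({n} : Set ℕ), MeasurableSpace.comap (X k)
        (inferInstance : MeasurableSpace (S × A × S)))
        = MeasurableSpace.comap (X n) inferInstance := by simp
    have h2 : (⨆ k ∈ {k | k ∈ Finset.range n}, MeasurableSpace.comap (X k)
        (inferInstance : MeasurableSpace (S × A × S))) = F n := by
      rw [hFdef]
      rfl
    rwa [h1, h2] at h
  -- law facts
  have hdPnn : ∀ x : S × A × S, 0 ≤ d x.1 x.2.1 * P x.1 x.2.1 x.2.2 := fun x =>
    mul_nonneg (hd _ _).le (hP0 _ _ _)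
  have hpre : ∀ n (x : S × A × S),
      μ ((X n) ⁻¹' {x}) = ENNReal.ofReal (d x.1 x.2.1 * P x.1 x.2.1 x.2.2) := by
    intro n ⟨s, a, s'⟩
    have h := hXlaw n s a s'
    have : (X n) ⁻¹' {(s, a, s')} = {ω | X n ω = (s, a, s')} := rfl
    rw [this, h]
  have htoReal : ∀ n (x : S × A × S),
      (μ ((X n) ⁻¹' {x})).toReal = d x.1 x.2.1 * P x.1 x.2.1 x.2.2 := fun n x => by
    rw [hpre n x, ENNReal.toReal_ofReal (hdPnn x)]
  have hsum1 : ∑ x : S × A × S, d x.1 x.2.1 * P x.1 x.2.1 x.2.2 = 1 := by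
    have hdisj : ((Finset.univ : Finset (S × A × S)) : Set (S × A × S)).PairwiseDisjoint
        (fun x => (X 0) ⁻¹' {x}) := by
      intro x _ y _ hxy
      simp only [Function.onFun, Set.disjoint_left, Set.mem_preimage, Set.mem_singleton_iff]
      rintro ω rfl h2
      exact hxy h2
    have hcover : ⋃ x ∈ (Finset.univ : Finset (S × A × S)), (X 0) ⁻¹' {x} = Set.univ := by
      ext ω
      simp
    have hmeq : μ (⋃ x ∈ (Finset.univ : Finset (S × A × S)), (X 0) ⁻¹' {x})
        = ∑ x : S × A × S, μ ((X 0) ⁻¹' {x}) :=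
      measure_biUnion_finset hdisj fun x _ => hXmeas 0 (MeasurableSet.singleton x)
    rw [hcover, measure_univ] at hmeq
    have := congrArg ENNReal.toReal hmeq
    rw [ENNReal.toReal_one, ENNReal.toReal_sum (fun x _ => measure_ne_top μ _)] at this
    rw [← Finset.sum_congr rfl fun x _ => htoReal 0 x]
    exact this.symm
  have hd1 : ∀ s a, d s a ≤ 1 := by
    intro s a
    have h1 : d s a = ∑ s', d s a * P s a s' := by
      rw [← Finset.mul_sum, hP1 s a, mul_one]
    have h2 : ∑ x : S × A × S, d x.1 x.2.1 * P x.1 x.2.1 x.2.2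
        = ∑ s₁ : S, ∑ a₁ : A, ∑ s' : S, d s₁ a₁ * P s₁ a₁ s' := by
      rw [Fintype.sum_prod_type]
      refine Finset.sum_congr rfl fun s₁ _ => ?_
      rw [Fintype.sum_prod_type]
    have h3 : ∑ s' : S, d s a * P s a s' ≤
        ∑ s₁ : S, ∑ a₁ : A, ∑ s' : S, d s₁ a₁ * P s₁ a₁ s' := by
      have h4 : ∑ s' : S, d s a * P s a s' ≤ ∑ a₁ : A, ∑ s' : S, d s a₁ * P s a₁ s' :=
        Finset.single_le_sum (f := fun a₁ => ∑ s' : S, d s a₁ * P s a₁ s')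
          (fun a₁ _ => Finset.sum_nonneg fun s' _ => mul_nonneg (hd _ _).le (hP0 _ _ _))
          (Finset.mem_univ a)
      refine le_trans h4 ?_
      exact Finset.single_le_sum (f := fun s₁ => ∑ a₁ : A, ∑ s' : S, d s₁ a₁ * P s₁ a₁ s')
        (fun s₁ _ => Finset.sum_nonneg fun a₁ _ => Finset.sum_nonneg fun s' _ =>
          mul_nonneg (hd _ _).le (hP0 _ _ _)) (Finset.mem_univ s)
    rw [h1]
    calc ∑ s', d s a * P s a s' ≤ _ := h3
      _ = 1 := by rw [← h2, hsum1]
  -- conditional expectation lemma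
  have hC : ∀ (n : ℕ) (G : Ω → S × A × S → ℝ) (c : ℝ),
      (∀ x, Measurable[F n] (fun ω => G ω x)) →
      (∀ ω x, |G ω x| ≤ c) →
      (∀ ω, ∑ x : S × A × S, (d x.1 x.2.1 * P x.1 x.2.1 x.2.2) * G ω x = 0) →
      μ[(fun ω => G ω (X n ω)) | F n] =ᵐ[μ] 0 := by
    intro n G c hGmeas hGbd hGzero
    set ind : S × A × S → Ω → ℝ := fun x => Set.indicator ((X n) ⁻¹' {x}) (fun _ => (1:ℝ))
      with hinddef
    have hindmeas_m0 : ∀ x, Measurable (ind x) := fun x =>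
      measurable_const.indicator (hXmeas n (MeasurableSet.singleton x))
    have hGmeas_m0 : ∀ x, Measurable (fun ω => G ω x) := fun x =>
      (hGmeas x).mono (F.le n) le_rfl
    have hint_term : ∀ x, Integrable (fun ω => G ω x * ind x ω) μ := by
      intro x
      refine Integrable.mono' (integrable_const c)
        ((hGmeas_m0 x).aestronglyMeasurable.mul (hindmeas_m0 x).aestronglyMeasurable)
        (Filter.Eventually.of_forall fun ω => ?_)
      rw [Real.norm_eq_abs, abs_mul]
      have h1 := hGbd ω x
      have h2 : |ind x ω| ≤ 1 := by
        rw [hinddef]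
        simp only [Set.indicator_apply]
        split <;> simp
      have h3 : (0:ℝ) ≤ c := le_trans (abs_nonneg _) (hGbd ω x)
      nlinarith [abs_nonneg (G ω x), abs_nonneg (ind x ω)]
    have hdecomp : (fun ω => G ω (X n ω)) = fun ω => ∑ x : S × A × S, G ω x * ind x ω := by
      funext ω
      have hsum : ∑ x : S × A × S, G ω x * ind x ω
          = ∑ x : S × A × S, if x = X n ω then G ω x else 0 := by
        refine Finset.sum_congr rfl fun x _ => ?_
        rw [hinddef]
        simp only [Set.indicator_apply, Set.mem_preimage, Set.mem_singleton_iff]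
        by_cases h : X n ω = x
        · rw [if_pos h, if_pos h.symm, mul_one]
        · rw [if_neg h, if_neg (fun hh => h hh.symm), mul_zero]
      rw [hsum, Finset.sum_ite_eq' Finset.univ (X n ω), if_pos (Finset.mem_univ _)]
    have hterm : ∀ x : S × A × S, μ[(fun ω => G ω x * ind x ω) | F n]
        =ᵐ[μ] fun ω => G ω x * (d x.1 x.2.1 * P x.1 x.2.1 x.2.2) := by
      intro x
      have hint_ind : Integrable (ind x) μ := by
        refine Integrable.mono' (integrable_const 1)
          (hindmeas_m0 x).aestronglyMeasurable (Filter.Eventually.of_forall fun ω => ?_)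
        rw [Real.norm_eq_abs, hinddef]
        simp only [Set.indicator_apply]
        split <;> simp
      have hpull : μ[(fun ω => G ω x * ind x ω) | F n]
          =ᵐ[μ] (fun ω => G ω x) * μ[ind x | F n] :=
        condExp_mul_of_stronglyMeasurable_left ((hGmeas x).stronglyMeasurable)
          (hint_term x) hint_ind
      have hsm : StronglyMeasurable[MeasurableSpace.comap (X n) inferInstance] (ind x) := by
        refine Measurable.stronglyMeasurable ?_
        exact measurable_const.indicator (hXkmeas n x)
      have hcind : μ[ind x | F n] =ᵐ[μ] fun _ => (μ ((X n) ⁻¹' {x})).toReal := by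
        have h := condExp_indep_eq ((hXmeas n).comap_le) (F.le n) hsm (hindep n)
        have hint : ∫ ω, ind x ω ∂μ = (μ ((X n) ⁻¹' {x})).toReal := by
          rw [hinddef]
          have := integral_indicator_const (μ := μ) (1:ℝ)
            (hXmeas n (MeasurableSet.singleton x) : MeasurableSet ((X n) ⁻¹' {x}))
          rw [this, smul_eq_mul, mul_one, Measure.real]
        refine h.trans ?_
        rw [hint]
      filter_upwards [hpull, hcind] with ω h1 h2
      rw [h1]
      simp only [Pi.mul_apply, h2]
      rw [htoReal n x]
    have hfeq : (fun ω => ∑ x : S × A × S, G ω x * ind x ω)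
        = ∑ x : S × A × S, (fun ω => G ω x * ind x ω) := by
      funext ω
      simp
    have hsumc : μ[(fun ω => ∑ x : S × A × S, G ω x * ind x ω) | F n]
        =ᵐ[μ] ∑ x : S × A × S, μ[(fun ω => G ω x * ind x ω) | F n] := by
      rw [hfeq]
      exact condExp_finset_sum (μ := μ) (m := F n) (s := (Finset.univ : Finset (S × A × S)))
        (f := fun x ω => G ω x * ind x ω) (fun x _ => hint_term x)
    rw [hdecomp]
    refine hsumc.trans ?_
    have hae : ∀ᵐ ω ∂μ, ∀ x : S × A × S,
        (μ[(fun ω => G ω x * ind x ω) | F n]) ω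
          = G ω x * (d x.1 x.2.1 * P x.1 x.2.1 x.2.2) :=
      ae_all_iff.2 fun x => hterm x
    filter_upwards [hae] with ω hω
    simp only [Finset.sum_apply, Pi.zero_apply]
    rw [Finset.sum_congr rfl (fun x _ => hω x)]
    have := hGzero ω
    rw [← this]
    exact Finset.sum_congr rfl fun x _ => mul_comm _ _
  -- helper: measurability of composed functions
  have hmeasXG : ∀ (k : ℕ) (G : Ω → S × A × S → ℝ),
      (∀ x, Measurable[F k] (fun ω => G ω x)) →
      Measurable[F (k+1)] (fun ω => G ω (X k ω)) := by
    intro k G hG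
    have hdecomp : (fun ω => G ω (X k ω)) = fun ω => ∑ x : S × A × S,
        Set.indicator ((X k) ⁻¹' {x}) (fun ω' => G ω' x) ω := by
      funext ω
      have hsum : ∑ x : S × A × S, Set.indicator ((X k) ⁻¹' {x}) (fun ω' => G ω' x) ω
          = ∑ x : S × A × S, if x = X k ω then G ω x else 0 := by
        refine Finset.sum_congr rfl fun x _ => ?_
        simp only [Set.indicator_apply, Set.mem_preimage, Set.mem_singleton_iff]
        by_cases h : X k ω = x
        · rw [if_pos h, if_pos h.symm]
        · rw [if_neg h, if_neg (fun hh => h hh.symm)]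
      rw [hsum, Finset.sum_ite_eq' Finset.univ (X k ω), if_pos (Finset.mem_univ _)]
    rw [hdecomp]
    refine Finset.measurable_sum _ fun x _ => ?_
    exact Measurable.indicator ((hG x).mono (F.mono (Nat.le_succ k)) le_rfl)
      ((hFcomap k (k+1) (Nat.lt_succ_self k)) _ (hXkmeas k x))
  -- selection sum algebra
  have hsel_sum : ∀ (s : S) (a : A) (h : S → ℝ),
      ∑ x : S × A × S, (d x.1 x.2.1 * P x.1 x.2.1 x.2.2) *
        (if s = x.1 ∧ a = x.2.1 then h x.2.2 else 0)
      = d s a * ∑ σ : S, P s a σ * h σ := by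
    intro s a h
    rw [Fintype.sum_prod_type]
    have hstep : ∀ s₁ : S, ∑ x2 : A × S, (d s₁ x2.1 * P s₁ x2.1 x2.2) *
        (if s = s₁ ∧ a = x2.1 then h x2.2 else 0)
        = if s = s₁ then ∑ σ : S, (d s₁ a * P s₁ a σ) * h σ else 0 := by
      intro s₁
      rw [Fintype.sum_prod_type]
      by_cases hs : s = s₁
      · rw [if_pos hs]
        have : ∀ a₁ : A, ∑ σ : S, (d s₁ a₁ * P s₁ a₁ σ) *
            (if s = s₁ ∧ a = a₁ then h σ else 0)
            = if a = a₁ then ∑ σ : S, (d s₁ a₁ * P s₁ a₁ σ) * h σ else 0 := by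
          intro a₁
          by_cases ha : a = a₁
          · rw [if_pos ha]
            refine Finset.sum_congr rfl fun σ _ => ?_
            rw [if_pos ⟨hs, ha⟩]
          · rw [if_neg ha]
            refine Finset.sum_eq_zero fun σ _ => ?_
            rw [if_neg (fun hh => ha hh.2), mul_zero]
        rw [Finset.sum_congr rfl fun a₁ _ => this a₁]
        rw [Finset.sum_ite_eq Finset.univ a (fun a₁ => ∑ σ : S, (d s₁ a₁ * P s₁ a₁ σ) * h σ)]
        rw [if_pos (Finset.mem_univ _)]
      · rw [if_neg hs]
        refine Finset.sum_eq_zero fun a₁ _ => Finset.sum_eq_zero fun σ _ => ?_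
        rw [if_neg (fun hh : s = s₁ ∧ a = a₁ => hs hh.1), mul_zero]
    rw [Finset.sum_congr rfl fun s₁ _ => hstep s₁]
    rw [Finset.sum_ite_eq Finset.univ s (fun s₁ => ∑ σ : S, (d s₁ a * P s₁ a σ) * h σ)]
    rw [if_pos (Finset.mem_univ _)]
    rw [Finset.mul_sum]
    refine Finset.sum_congr rfl fun σ _ => ?_
    ring
  have hB0 : (0:ℝ) ≤ B := le_trans (div_nonneg hR0 (by linarith)) hRB
  have hQAB : ∀ k ω s a, |QA k ω s a| ≤ B := fun k ω s a => le_trans (hmQA k ω s a) (hmB ω k)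
  have hQBB : ∀ k ω s a, |QB k ω s a| ≤ B := fun k ω s a => le_trans (hmQB k ω s a) (hmB ω k)
  -- Application 1: divergence of selected steps
  have happ1 : ∀ (s : S) (a : A), ∀ᵐ ω ∂μ, ∃ l, Tendsto (fun n => ∑ k ∈ Finset.range n,
      α k * ((if s = (X k ω).1 ∧ a = (X k ω).2.1 then (1:ℝ) else 0) - d s a))
      atTop (𝓝 l) := by
    intro s a
    have hd0 := (hd s a).le
    have hd1' := hd1 s a
    refine lemmaM F (fun k ω => α k * ((if s = (X k ω).1 ∧ a = (X k ω).2.1 then (1:ℝ) else 0)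
      - d s a)) (fun k => α k) hαsq ?_ ?_ ?_
    · intro k
      refine Measurable.stronglyMeasurable ?_
      exact hmeasXG k (fun ω x => α k * ((if s = x.1 ∧ a = x.2.1 then (1:ℝ) else 0) - d s a))
        (fun x => measurable_const)
    · intro k ω
      rw [abs_mul, abs_of_nonneg (hα0 k)]
      have h1 : |(if s = (X k ω).1 ∧ a = (X k ω).2.1 then (1:ℝ) else 0) - d s a| ≤ 1 := by
        split <;> (rw [abs_le]; constructor <;> linarith)
      nlinarith [hα1 k, hα0 k]
    · intro k
      refine hC k (fun ω x => α k * ((if s = x.1 ∧ a = x.2.1 then (1:ℝ) else 0) - d s a)) 1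
        (fun x => measurable_const) ?_ ?_
      · intro ω x
        rw [abs_mul, abs_of_nonneg (hα0 k)]
        have h1 : |(if s = x.1 ∧ a = x.2.1 then (1:ℝ) else 0) - d s a| ≤ 1 := by
          split <;> (rw [abs_le]; constructor <;> linarith)
        nlinarith [hα1 k, hα0 k]
      · intro ω
        have h1 : ∀ x : S × A × S, (d x.1 x.2.1 * P x.1 x.2.1 x.2.2) *
            (α k * ((if s = x.1 ∧ a = x.2.1 then (1:ℝ) else 0) - d s a))
            = α k * ((d x.1 x.2.1 * P x.1 x.2.1 x.2.2) *
                (if s = x.1 ∧ a = x.2.1 then (1:ℝ) else 0))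
              - α k * d s a * (d x.1 x.2.1 * P x.1 x.2.1 x.2.2) := by
          intro x
          by_cases h : s = x.1 ∧ a = x.2.1
          · rw [if_pos h]; ring
          · rw [if_neg h]; ring
        rw [Finset.sum_congr rfl fun x _ => h1 x, Finset.sum_sub_distrib,
          ← Finset.mul_sum, ← Finset.mul_sum]
        have h2 : ∑ x : S × A × S, (d x.1 x.2.1 * P x.1 x.2.1 x.2.2) *
            (if s = x.1 ∧ a = x.2.1 then (1:ℝ) else 0) = d s a := by
          have h3 : ∀ x : S × A × S, (if s = x.1 ∧ a = x.2.1 then (1:ℝ) else 0)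
              = (if s = x.1 ∧ a = x.2.1 then (fun _ : S => (1:ℝ)) x.2.2 else 0) := fun x => rfl
          rw [Finset.sum_congr rfl fun x _ => by rw [h3 x], hsel_sum s a (fun _ => 1)]
          simp [hP1 s a]
        rw [h2, hsum1]
        ring
  -- Application 2: noise sums converge
  have happ2 : ∀ (Y : ℕ → Ω → S → A → ℝ),
      (∀ k s a, Measurable[F k] (fun ω => Y k ω s a)) →
      (∀ k ω s a, |Y k ω s a| ≤ B) →
      ∀ (s : S) (a : A), ∀ᵐ ω ∂μ, ∃ l, Tendsto (fun n => ∑ k ∈ Finset.range n,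
        α k * (if s = (X k ω).1 ∧ a = (X k ω).2.1 then
          (r s a (X k ω).2.2 + γ * maxQ (Y k ω) (X k ω).2.2) - bellmanT P r γ (Y k ω) s a
        else 0)) atTop (𝓝 l) := by
    intro Y hYmeas hYB s a
    set C2 : ℝ := 2 * (R + γ * B) with hC2def
    have hC2nn : 0 ≤ C2 := by nlinarith [mul_nonneg hγ0 hB0]
    have hgbd : ∀ k ω σ, |r s a σ + γ * maxQ (Y k ω) σ| ≤ R + γ * B := by
      intro k ω σ
      have h1 := hR s a σ
      have h2 : |maxQ (Y k ω) σ| ≤ B := abs_maxQ_le _ _ _ (hYB k ω)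
      have h3 := abs_add_le (r s a σ) (γ * maxQ (Y k ω) σ)
      rw [abs_mul, abs_of_nonneg hγ0] at h3
      nlinarith [mul_le_mul_of_nonneg_left h2 hγ0]
    have hTbd : ∀ k ω, |bellmanT P r γ (Y k ω) s a| ≤ R + γ * B := by
      intro k ω
      unfold bellmanT
      refine le_trans (Finset.abs_sum_le_sum_abs _ _) ?_
      have h1 : ∀ σ : S, |P s a σ * (r s a σ + γ * maxQ (Y k ω) σ)|
          ≤ P s a σ * (R + γ * B) := by
        intro σ
        rw [abs_mul, abs_of_nonneg (hP0 s a σ)]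
        exact mul_le_mul_of_nonneg_left (hgbd k ω σ) (hP0 s a σ)
      refine le_trans (Finset.sum_le_sum fun σ _ => h1 σ) ?_
      rw [← Finset.sum_mul, hP1 s a, one_mul]
    have hitebd : ∀ k ω (x : S × A × S), |(if s = x.1 ∧ a = x.2.1 then
        (r s a x.2.2 + γ * maxQ (Y k ω) x.2.2) - bellmanT P r γ (Y k ω) s a else 0)| ≤ C2 := by
      intro k ω x
      split
      · have h1 := hgbd k ω x.2.2
        have h2 := hTbd k ω
        rw [hC2def]
        have := abs_sub (r s a x.2.2 + γ * maxQ (Y k ω) x.2.2) (bellmanT P r γ (Y k ω) s a)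
        linarith
      · simpa using hC2nn
    have hGmeasx : ∀ k (x : S × A × S), Measurable[F k] (fun ω =>
        α k * (if s = x.1 ∧ a = x.2.1 then
          (r s a x.2.2 + γ * maxQ (Y k ω) x.2.2) - bellmanT P r γ (Y k ω) s a else 0)) := by
      intro k x
      refine Measurable.const_mul ?_ (α k)
      split
      · refine Measurable.sub ?_ ?_
        · exact Measurable.add measurable_const
            ((measurable_sup'_fun _ _ (fun a' ω => Y k ω x.2.2 a')
              (fun a' => hYmeas k x.2.2 a')).const_mul γ)
        · unfold bellmanT
          refine Finset.measurable_sum _ fun σ _ => ?_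
          refine Measurable.const_mul ?_ (P s a σ)
          exact Measurable.add measurable_const
            ((measurable_sup'_fun _ _ (fun a' ω => Y k ω σ a')
              (fun a' => hYmeas k σ a')).const_mul γ)
      · exact measurable_const
    refine lemmaM F _ (fun k => α k * C2) ?_ ?_ ?_ ?_
    · have h1 : Summable fun k => C2^2 * (α k)^2 := hαsq.mul_left (C2^2)
      refine h1.congr fun k => ?_
      ring
    · intro k
      refine Measurable.stronglyMeasurable ?_
      exact hmeasXG k (fun ω x => α k * (if s = x.1 ∧ a = x.2.1 then
        (r s a x.2.2 + γ * maxQ (Y k ω) x.2.2) - bellmanT P r γ (Y k ω) s a else 0))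
        (hGmeasx k)
    · intro k ω
      rw [abs_mul, abs_of_nonneg (hα0 k)]
      exact mul_le_mul_of_nonneg_left (hitebd k ω (X k ω)) (hα0 k)
    · intro k
      refine hC k (fun ω x => α k * (if s = x.1 ∧ a = x.2.1 then
        (r s a x.2.2 + γ * maxQ (Y k ω) x.2.2) - bellmanT P r γ (Y k ω) s a else 0)) C2
        (hGmeasx k) ?_ ?_
      · intro ω x
        rw [abs_mul, abs_of_nonneg (hα0 k)]
        have := mul_le_mul (hα1 k) (hitebd k ω x) (abs_nonneg _) zero_le_one
        rw [one_mul] at this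
        exact this
      · intro ω
        have h1 : ∀ x : S × A × S, (d x.1 x.2.1 * P x.1 x.2.1 x.2.2) *
            (α k * (if s = x.1 ∧ a = x.2.1 then
              (r s a x.2.2 + γ * maxQ (Y k ω) x.2.2) - bellmanT P r γ (Y k ω) s a else 0))
            = α k * ((d x.1 x.2.1 * P x.1 x.2.1 x.2.2) *
              (if s = x.1 ∧ a = x.2.1 then
                (fun σ => (r s a σ + γ * maxQ (Y k ω) σ) - bellmanT P r γ (Y k ω) s a) x.2.2
              else 0)) := by
          intro x
          by_cases h : s = x.1 ∧ a = x.2.1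
          · simp only [if_pos h]; ring
          · simp only [if_neg h]; ring
        rw [Finset.sum_congr rfl fun x _ => h1 x, ← Finset.mul_sum,
          hsel_sum s a (fun σ => (r s a σ + γ * maxQ (Y k ω) σ) - bellmanT P r γ (Y k ω) s a)]
        have h2 : ∑ σ : S, P s a σ *
            ((r s a σ + γ * maxQ (Y k ω) σ) - bellmanT P r γ (Y k ω) s a)
            = bellmanT P r γ (Y k ω) s a - bellmanT P r γ (Y k ω) s a := by
          have h3 : ∀ σ : S, P s a σ *
              ((r s a σ + γ * maxQ (Y k ω) σ) - bellmanT P r γ (Y k ω) s a)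
              = P s a σ * (r s a σ + γ * maxQ (Y k ω) σ)
                - P s a σ * bellmanT P r γ (Y k ω) s a := fun σ => by ring
          rw [Finset.sum_congr rfl fun σ _ => h3 σ, Finset.sum_sub_distrib]
          congr 1
          rw [← Finset.sum_mul, hP1 s a, one_mul]
        rw [h2]
        simp
  -- assemble almost-everywhere events
  have hae1 : ∀ᵐ ω ∂μ, ∀ p : S × A, ∃ l, Tendsto (fun n => ∑ k ∈ Finset.range n,
      α k * ((if p.1 = (X k ω).1 ∧ p.2 = (X k ω).2.1 then (1:ℝ) else 0) - d p.1 p.2))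
      atTop (𝓝 l) := ae_all_iff.2 fun p => happ1 p.1 p.2
  have hae2 : ∀ᵐ ω ∂μ, ∀ p : S × A, ∃ l, Tendsto (fun n => ∑ k ∈ Finset.range n,
      α k * (if p.1 = (X k ω).1 ∧ p.2 = (X k ω).2.1 then
        (r p.1 p.2 (X k ω).2.2 + γ * maxQ (QB k ω) (X k ω).2.2)
          - bellmanT P r γ (QB k ω) p.1 p.2
      else 0)) atTop (𝓝 l) :=
    ae_all_iff.2 fun p => happ2 QB (fun k s a => (hQmeas k s a).2) hQBB p.1 p.2
  have hae3 : ∀ᵐ ω ∂μ, ∀ p : S × A, ∃ l, Tendsto (fun n => ∑ k ∈ Finset.range n,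
      α k * (if p.1 = (X k ω).1 ∧ p.2 = (X k ω).2.1 then
        (r p.1 p.2 (X k ω).2.2 + γ * maxQ (QA k ω) (X k ω).2.2)
          - bellmanT P r γ (QA k ω) p.1 p.2
      else 0)) atTop (𝓝 l) :=
    ae_all_iff.2 fun p => happ2 QA (fun k s a => (hQmeas k s a).1) hQAB p.1 p.2
  filter_upwards [hae1, hae2, hae3] with ω h1 h2 h3
  -- deterministic endgame for this ω
  set e : ℕ → Bool × S × A → ℝ := fun k i =>
    (if i.1 = true then QA k ω i.2.1 i.2.2 else QB k ω i.2.1 i.2.2) - Qstar i.2.1 i.2.2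
    with hedef
  set bb : ℕ → Bool × S × A → ℝ := fun k i =>
    (1 + β) * α k * (if i.2.1 = (X k ω).1 ∧ i.2.2 = (X k ω).2.1 then (1:ℝ) else 0) with hbbdef
  set uu : ℕ → Bool × S × A → ℝ := fun k i =>
    α k * (if i.2.1 = (X k ω).1 ∧ i.2.2 = (X k ω).2.1 then
      (r i.2.1 i.2.2 (X k ω).2.2 +
        γ * maxQ ((if i.1 = true then QB else QA) k ω) (X k ω).2.2)
        - bellmanT P r γ ((if i.1 = true then QB else QA) k ω) i.2.1 i.2.2
    else 0) with huudef
  set κ : ℝ := (γ + β) / (1 + β) with hκdef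
  have hκ0 : 0 ≤ κ := div_nonneg (by linarith) (by linarith)
  have hκ1 : κ < 1 := by
    rw [hκdef, div_lt_one (by linarith : (0:ℝ) < 1 + β)]
    linarith
  have hlemD := lemmaD e bb uu κ hκ0 hκ1 K0 (B + supNorm Qstar)
  have hMMle : ∀ k (i : Bool × S × A), |e k i| ≤
      Finset.univ.sup' Finset.univ_nonempty fun j => |e k j| :=
    fun k i => Finset.le_sup' (fun j => |e k j|) (Finset.mem_univ i)
  have hMM0 : ∀ k, 0 ≤ Finset.univ.sup' Finset.univ_nonempty fun j : Bool × S × A => |e k j| :=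
    fun k => le_trans (abs_nonneg _) (hMMle k (Classical.arbitrary _))
  have hb0' : ∀ k (i : Bool × S × A), K0 ≤ k → 0 ≤ bb k i := by
    intro k i _
    simp only [hbbdef]
    have h4 : (0:ℝ) ≤ (if i.2.1 = (X k ω).1 ∧ i.2.2 = (X k ω).2.1 then (1:ℝ) else 0) := by
      split <;> norm_num
    have h5 := hα0 k
    positivity
  have hb1' : ∀ k (i : Bool × S × A), K0 ≤ k → bb k i ≤ 1 := by
    intro k i hk
    simp only [hbbdef]
    have h4 := hK0 k hk
    have h5 := hα0 k
    split
    · rw [mul_one]; exact h4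
    · rw [mul_zero]; norm_num
  have hdiv' : ∀ i : Bool × S × A, Tendsto (fun n => ∑ k ∈ Finset.range n, bb k i)
      atTop atTop := by
    intro i
    obtain ⟨l, hl⟩ := h1 (i.2.1, i.2.2)
    have hχ : Tendsto (fun n => ∑ k ∈ Finset.range n,
        α k * (if i.2.1 = (X k ω).1 ∧ i.2.2 = (X k ω).2.1 then (1:ℝ) else 0))
        atTop atTop := by
      have heq : ∀ n, ∑ k ∈ Finset.range n,
          α k * (if i.2.1 = (X k ω).1 ∧ i.2.2 = (X k ω).2.1 then (1:ℝ) else 0)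
          = (d i.2.1 i.2.2 * ∑ k ∈ Finset.range n, α k) + ∑ k ∈ Finset.range n,
            α k * ((if i.2.1 = (X k ω).1 ∧ i.2.2 = (X k ω).2.1 then (1:ℝ) else 0)
              - d i.2.1 i.2.2) := by
        intro n
        rw [Finset.mul_sum, ← Finset.sum_add_distrib]
        exact Finset.sum_congr rfl fun k _ => by ring
      rw [funext heq]
      exact Tendsto.atTop_add (Tendsto.const_mul_atTop (hd _ _) hαdiv) hl
    have heq2 : ∀ n, ∑ k ∈ Finset.range n, bb k i = (1 + β) * ∑ k ∈ Finset.range n,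
        α k * (if i.2.1 = (X k ω).1 ∧ i.2.2 = (X k ω).2.1 then (1:ℝ) else 0) := by
      intro n
      rw [Finset.mul_sum]
      refine Finset.sum_congr rfl fun k _ => ?_
      simp only [hbbdef]
      ring
    rw [funext heq2]
    exact Tendsto.const_mul_atTop (by linarith) hχ
  have hu' : ∀ i : Bool × S × A, ∃ l, Tendsto (fun n => ∑ k ∈ Finset.range n, uu k i)
      atTop (𝓝 l) := by
    rintro ⟨bv, s, a⟩
    cases bv
    · obtain ⟨l, hl⟩ := h3 (s, a)
      refine ⟨l, Tendsto.congr (fun n => Finset.sum_congr rfl fun k _ => ?_) hl⟩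
      simp [huudef]
    · obtain ⟨l, hl⟩ := h2 (s, a)
      refine ⟨l, Tendsto.congr (fun n => Finset.sum_congr rfl fun k _ => ?_) hl⟩
      simp [huudef]
  have hD' : ∀ k (i : Bool × S × A), |e k i| ≤ B + supNorm Qstar := by
    intro k i
    simp only [hedef]
    have h4 : |Qstar i.2.1 i.2.2| ≤ supNorm Qstar := abs_le_supNorm _ _ _
    have h5 := abs_sub (if i.1 = true then QA k ω i.2.1 i.2.2 else QB k ω i.2.1 i.2.2)
      (Qstar i.2.1 i.2.2)
    have h6 : |if i.1 = true then QA k ω i.2.1 i.2.2 else QB k ω i.2.1 i.2.2| ≤ B := by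
      split
      · exact hQAB k ω _ _
      · exact hQBB k ω _ _
    linarith
  have hrec' : ∀ k (i : Bool × S × A), K0 ≤ k →
      |e (k+1) i - (1 - bb k i) * e k i - uu k i| ≤
        bb k i * κ * (Finset.univ.sup' Finset.univ_nonempty fun j => |e k j|) := by
    intro k i hk
    obtain ⟨bv, s, a⟩ := i
    have hmain : ∀ (QQ QQ' : ℕ → Ω → S → A → ℝ),
        (QQ (k+1) ω s a = QQ k ω s a +
          α k * (if s = (X k ω).1 ∧ a = (X k ω).2.1 then
            r (X k ω).1 (X k ω).2.1 (X k ω).2.2 + γ * maxQ (QQ' k ω) (X k ω).2.2 -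
              QQ k ω (X k ω).1 (X k ω).2.1 +
              β * (QQ' k ω (X k ω).1 (X k ω).2.1 - QQ k ω (X k ω).1 (X k ω).2.1)
          else 0)) →
        (∀ s' a', |QQ' k ω s' a' - Qstar s' a'|
          ≤ Finset.univ.sup' Finset.univ_nonempty fun j => |e k j|) →
        |(QQ (k+1) ω s a - Qstar s a)
          - (1 - (1 + β) * α k * (if s = (X k ω).1 ∧ a = (X k ω).2.1 then (1:ℝ) else 0))
            * (QQ k ω s a - Qstar s a)
          - α k * (if s = (X k ω).1 ∧ a = (X k ω).2.1 then
              (r s a (X k ω).2.2 + γ * maxQ (QQ' k ω) (X k ω).2.2)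
                - bellmanT P r γ (QQ' k ω) s a
            else 0)|
          ≤ (1 + β) * α k * (if s = (X k ω).1 ∧ a = (X k ω).2.1 then (1:ℝ) else 0) * κ *
            (Finset.univ.sup' Finset.univ_nonempty fun j => |e k j|) := by
      intro QQ QQ' hrecQQ hQ'M
      by_cases hsel : s = (X k ω).1 ∧ a = (X k ω).2.1
      · rw [hrecQQ]
        simp only [if_pos hsel]
        obtain ⟨hs1, hs2⟩ := hsel
        rw [← hs1, ← hs2]
        have hidd : QQ k ω s a +
            α k * (r s a (X k ω).2.2 + γ * maxQ (QQ' k ω) (X k ω).2.2 - QQ k ω s a +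
              β * (QQ' k ω s a - QQ k ω s a)) - Qstar s a
            - (1 - (1 + β) * α k * 1) * (QQ k ω s a - Qstar s a)
            - α k * ((r s a (X k ω).2.2 + γ * maxQ (QQ' k ω) (X k ω).2.2)
                - bellmanT P r γ (QQ' k ω) s a)
            = α k * ((bellmanT P r γ (QQ' k ω) s a - Qstar s a)
                + β * (QQ' k ω s a - Qstar s a)) := by ring
        rw [hidd, abs_mul, abs_of_nonneg (hα0 k)]
        have hcontr : |bellmanT P r γ (QQ' k ω) s a - Qstar s a|
            ≤ γ * (Finset.univ.sup' Finset.univ_nonempty fun j => |e k j|) := by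
          have hq : Qstar s a = bellmanT P r γ Qstar s a :=
            (congrFun (congrFun hQstar s) a).symm
          rw [hq]
          exact bellmanT_contract P r γ hγ0 hP0 hP1 (QQ' k ω) Qstar s a _ hQ'M
        have hδ := hQ'M s a
        have habs2 : |(bellmanT P r γ (QQ' k ω) s a - Qstar s a)
            + β * (QQ' k ω s a - Qstar s a)|
            ≤ |bellmanT P r γ (QQ' k ω) s a - Qstar s a| + β * |QQ' k ω s a - Qstar s a| := by
          refine le_trans (abs_add_le _ _) ?_
          rw [abs_mul, abs_of_nonneg hβ.le]
        have hrhs : (1 + β) * α k * 1 * κ *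
            (Finset.univ.sup' Finset.univ_nonempty fun j => |e k j|)
            = α k * ((γ + β) * (Finset.univ.sup' Finset.univ_nonempty fun j => |e k j|)) := by
          rw [hκdef]
          field_simp
        rw [hrhs]
        have hα0k := hα0 k
        have hMM0k := hMM0 k
        refine mul_le_mul_of_nonneg_left ?_ hα0k
        nlinarith [mul_le_mul_of_nonneg_left hδ hβ.le]
      · rw [hrecQQ]
        simp only [if_neg hsel]
        simp
    cases bv
    · -- QB component
      have h7 := hmain QB QA (hQBrec k ω s a) (fun s' a' => by
        have := hMMle k (true, s', a')
        simpa [hedef] using this)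
      simp only [hedef, hbbdef, huudef]
      simpa using h7
    · -- QA component
      have h7 := hmain QA QB (hQArec k ω s a) (fun s' a' => by
        have := hMMle k (false, s', a')
        simpa [hedef] using this)
      simp only [hedef, hbbdef, huudef]
      simpa using h7
  have hconv := hlemD hb0' hb1' hdiv' hu' hD' hrec'
  intro s a
  constructor
  · have h8 := hconv (true, s, a)
    have h9 : (fun k => e k (true, s, a)) = fun k => QA k ω s a - Qstar s a := by
      funext k
      simp [hedef]
    rw [h9] at h8
    exact tendsto_sub_nhds_zero_iff.mp h8
  · have h8 := hconv (false, s, a)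
    have h9 : (fun k => e k (false, s, a)) = fun k => QB k ω s a - Qstar s a := by
      funext k
      simp [hedef]
    rw [h9] at h8
    exact tendsto_sub_nhds_zero_iff.mp h8
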